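/- Let C be an arrovian voting system on at least three alternatives. If J_1 and J_2 are strongly decisive subsets of I, then their intersection J_1 ∩ J_2 is strongly decisive. -/
import Mathlib


variable {A I : Type*}

/-- A partial preorder: a reflexive and transitive binary relation. -/
def IsPPO (P : A → A → Prop) : Prop := Reflexive P ∧ Transitive P

/-- A linear (total) preorder: reflexive, transitive and complete. -/
def IsLPO (P : A → A → Prop) : Prop := Reflexive P ∧ Transitive P ∧ ∀ a b, P a b ∨ P b a

/-- A profile of partial preorders. -/
def IsPPOProfile (P : I → A → A → Prop) : Prop := ∀ i, IsPPO (P i)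

/-- A profile of linear (total) preorders. -/
def IsLPOProfile (P : I → A → A → Prop) : Prop := ∀ i, IsLPO (P i)

/-- Strict preference. -/
def StrictPref (P : A → A → Prop) (a b : A) : Prop := P a b ∧ ¬ P b a

/-- Indifference. -/
def Indiff (P : A → A → Prop) (a b : A) : Prop := P a b ∧ P b a

/-- The set `A` contains at least three distinct alternatives. -/
def ThreeAlts (A : Type*) : Prop := ∃ a b c : A, a ≠ b ∧ b ≠ c ∧ a ≠ c

/-- Unanimity. -/
def Unanimity (C : (I → A → A → Prop) → A → A → Prop) : Prop :=
  ∀ P, IsPPOProfile P → ∀ a b : A, (∀ i, P i a b) → C P a b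

/-- Independence of irrelevant alternatives. -/
def IIA (C : (I → A → A → Prop) → A → A → Prop) : Prop :=
  ∀ P P' : I → A → A → Prop, IsPPOProfile P → IsPPOProfile P' → ∀ a b : A,
    {i | P i a b} = {i | P' i a b} → {i | P i b a} = {i | P' i b a} →
    (C P a b ↔ C P' a b)

/-- Neutrality: `C (ρ*P) = ρ*(C P)` for every permutation `ρ` of the alternatives. -/
def Neutrality (C : (I → A → A → Prop) → A → A → Prop) : Prop :=
  ∀ (ρ : Equiv.Perm A) (P : I → A → A → Prop), IsPPOProfile P →
    ∀ x y : A, C (fun i a b => P i (ρ.symm a) (ρ.symm b)) x y ↔ C P (ρ.symm x) (ρ.symm y)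

/-- Monotonicity. -/
def Monotonicity (C : (I → A → A → Prop) → A → A → Prop) : Prop :=
  ∀ P P' : I → A → A → Prop, IsPPOProfile P → IsPPOProfile P' → ∀ a b : A,
    {i | P i a b} ⊆ {i | P' i a b} → {i | P' i b a} ⊆ {i | P i b a} →
    C P a b → C P' a b

/-- `J` is a decisive set: unanimous strict preference on `J` forces weak aggregate preference. -/
def Decisive (C : (I → A → A → Prop) → A → A → Prop) (J : Set I) : Prop :=
  ∀ P, IsPPOProfile P → ∀ a b : A, (∀ j ∈ J, StrictPref (P j) a b) → C P a b

/-- `J` is a strongly decisive set: unanimous weak preference on `J` forces weak aggregate preference. -/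
def SDecisive (C : (I → A → A → Prop) → A → A → Prop) (J : Set I) : Prop :=
  ∀ P, IsPPOProfile P → ∀ a b : A, (∀ j ∈ J, P j a b) → C P a b

def QRel {A I : Type*} (P : I → A → A → Prop) (J₁ J₂ : Set I) (a b c : A) (i : I)
    (x y : A) : Prop :=
  x = y ∨ (x = a ∧ y = b ∧ P i a b) ∨ (x = b ∧ y = a ∧ P i b a)
    ∨ (x = a ∧ y = c ∧ i ∈ J₁) ∨ (x = c ∧ y = b ∧ i ∈ J₂)
    ∨ (x = b ∧ y = c ∧ P i b a ∧ i ∈ J₁) ∨ (x = c ∧ y = a ∧ i ∈ J₂ ∧ P i b a)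

lemma QRel_trans {A I : Type*} (P : I → A → A → Prop) (J₁ J₂ : Set I) (a b c : A) (i : I)
    (hab : a ≠ b) (hca : c ≠ a) (hcb : c ≠ b)
    (hmem : i ∈ J₁ → i ∈ J₂ → P i a b) :
    Transitive (QRel P J₁ J₂ a b c i) := by
  intro u v w huv hvw
  rcases huv with rfl | ⟨rfl, rfl, h⟩ | ⟨rfl, rfl, h⟩ | ⟨rfl, rfl, h⟩ | ⟨rfl, rfl, h⟩ |
      ⟨rfl, rfl, h, h'⟩ | ⟨rfl, rfl, h, h'⟩ <;>
    [skip;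
     rcases hvw with rfl | ⟨h1, rfl, h2⟩ | ⟨h1, rfl, h2⟩ | ⟨h1, rfl, h2⟩ | ⟨h1, rfl, h2⟩ |
       ⟨h1, rfl, h2, h2'⟩ | ⟨h1, rfl, h2, h2'⟩;
     rcases hvw with rfl | ⟨h1, rfl, h2⟩ | ⟨h1, rfl, h2⟩ | ⟨h1, rfl, h2⟩ | ⟨h1, rfl, h2⟩ |
       ⟨h1, rfl, h2, h2'⟩ | ⟨h1, rfl, h2, h2'⟩;
     rcases hvw with rfl | ⟨h1, rfl, h2⟩ | ⟨h1, rfl, h2⟩ | ⟨h1, rfl, h2⟩ | ⟨h1, rfl, h2⟩ |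
       ⟨h1, rfl, h2, h2'⟩ | ⟨h1, rfl, h2, h2'⟩;
     rcases hvw with rfl | ⟨h1, rfl, h2⟩ | ⟨h1, rfl, h2⟩ | ⟨h1, rfl, h2⟩ | ⟨h1, rfl, h2⟩ |
       ⟨h1, rfl, h2, h2'⟩ | ⟨h1, rfl, h2, h2'⟩;
     rcases hvw with rfl | ⟨h1, rfl, h2⟩ | ⟨h1, rfl, h2⟩ | ⟨h1, rfl, h2⟩ | ⟨h1, rfl, h2⟩ |
       ⟨h1, rfl, h2, h2'⟩ | ⟨h1, rfl, h2, h2'⟩;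
     rcases hvw with rfl | ⟨h1, rfl, h2⟩ | ⟨h1, rfl, h2⟩ | ⟨h1, rfl, h2⟩ | ⟨h1, rfl, h2⟩ |
       ⟨h1, rfl, h2, h2'⟩ | ⟨h1, rfl, h2, h2'⟩] <;>
    first
      | exact hvw
      | exact Or.inl rfl
      | exact absurd h1 hab
      | exact absurd h1 hab.symm
      | exact absurd h1 hca
      | exact absurd h1 hcb
      | exact absurd h1 hca.symm
      | exact absurd h1 hcb.symm
      | (refine Or.inr (Or.inl ⟨rfl, rfl, ?_⟩); first | exact h | exact h2 | exact hmem h h2 | exact hmem h2' h2 | exact hmem h2 h2' | assumption)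
      | (refine Or.inr (Or.inr (Or.inl ⟨rfl, rfl, ?_⟩)); first | exact h | exact h2 | exact h' | exact h2' | assumption)
      | (refine Or.inr (Or.inr (Or.inr (Or.inl ⟨rfl, rfl, ?_⟩))); first | exact h | exact h2 | exact h' | exact h2' | assumption)
      | (refine Or.inr (Or.inr (Or.inr (Or.inr (Or.inl ⟨rfl, rfl, ?_⟩)))); first | exact h | exact h2 | exact h' | exact h2' | assumption)
      | (refine Or.inr (Or.inr (Or.inr (Or.inr (Or.inr (Or.inl ⟨rfl, rfl, ?_, ?_⟩))))) <;>
          first | exact h | exact h2 | exact h2' | exact h' | assumption)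
      | (refine Or.inr (Or.inr (Or.inr (Or.inr (Or.inr (Or.inr ⟨rfl, rfl, ?_, ?_⟩))))) <;>
          first | exact h | exact h2 | exact h2' | exact h' | assumption)

theorem strongly_decisive_intersection [Fintype I] (C : (I → A → A → Prop) → A → A → Prop)
    (hA : ThreeAlts A)
    (hC : ∀ P, IsPPOProfile P → IsPPO (C P))
    (hU : Unanimity C) (hIIA : IIA C) :
    ∀ J₁ J₂ : Set I, SDecisive C J₁ → SDecisive C J₂ → SDecisive C (J₁ ∩ J₂) := by
  intro J₁ J₂ hJ1 hJ2 P hP a b hab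
  by_cases heq : a = b
  · subst heq; exact (hC P hP).1 a
  obtain ⟨x, y, z, hxy, hyz, hxz⟩ := hA
  obtain ⟨c, hca, hcb⟩ : ∃ c : A, c ≠ a ∧ c ≠ b := by
    by_contra h
    push_neg at h
    have hx := h x; have hy := h y; have hz := h z
    by_cases hxa : x = a <;> by_cases hya : y = a <;> by_cases hza : z = a <;> simp_all
  have hQ : IsPPOProfile (QRel P J₁ J₂ a b c) := fun i =>
    ⟨fun u => Or.inl rfl,
     QRel_trans P J₁ J₂ a b c i heq hca hcb (fun h1 h2 => hab i ⟨h1, h2⟩)⟩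
  have hQac : C (QRel P J₁ J₂ a b c) a c :=
    hJ1 _ hQ a c (fun j hj => Or.inr (Or.inr (Or.inr (Or.inl ⟨rfl, rfl, hj⟩))))
  have hQcb : C (QRel P J₁ J₂ a b c) c b :=
    hJ2 _ hQ c b (fun j hj => Or.inr (Or.inr (Or.inr (Or.inr (Or.inl ⟨rfl, rfl, hj⟩)))))
  have hQab : C (QRel P J₁ J₂ a b c) a b := (hC _ hQ).2 hQac hQcb
  have e1 : {i | QRel P J₁ J₂ a b c i a b} = {i | P i a b} := by
    ext i
    simp only [Set.mem_setOf_eq]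
    unfold QRel
    constructor
    · rintro (h | ⟨_, _, h⟩ | ⟨h, _⟩ | ⟨_, h, _⟩ | ⟨h, _⟩ | ⟨h, _⟩ | ⟨h, _⟩) <;>
        first
          | exact h
          | exact absurd h heq
          | exact absurd h (Ne.symm heq)
          | exact absurd h.symm heq
          | exact absurd h.symm hcb
          | exact absurd h.symm hca
          | exact absurd h hca
          | exact absurd h hcb
    · intro h; exact Or.inr (Or.inl ⟨rfl, rfl, h⟩)
  have e2 : {i | QRel P J₁ J₂ a b c i b a} = {i | P i b a} := by
    ext i
    simp only [Set.mem_setOf_eq]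
    unfold QRel
    constructor
    · rintro (h | ⟨h, _⟩ | ⟨_, _, h⟩ | ⟨h, _⟩ | ⟨h, _⟩ | ⟨_, h, _⟩ | ⟨h, _⟩) <;>
        first
          | exact h
          | exact absurd h heq
          | exact absurd h (Ne.symm heq)
          | exact absurd h.symm heq
          | exact absurd h.symm hcb
          | exact absurd h.symm hca
          | exact absurd h hca
          | exact absurd h hcb
    · intro h; exact Or.inr (Or.inr (Or.inl ⟨rfl, rfl, h⟩))
  exact (hIIA _ P hQ hP a b e1 e2).mp hQab
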